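/- Let p > 2, let p' = p/2, and let T ≥ r ≥ 1 be integers. Define D_p(T,r) = inf over w ∈ ℝ^T with w ≥ 0 and ‖w‖_{p'} ≤ 1 of ∑_{i=1}^r (∑_{ℓ=1}^{T-r+i} w_ℓ)^{-1}. Then (T−r+1)^{2/p} (H_T − H_{T−r}) ≤ D_p(T,r) ≤ T^{2/p} (H_T − H_{T−r}). -/

import Mathlib

open Finset

private lemma sum_le_card_rpow {p' : ℝ} (hp' : 1 ≤ p') {m : ℕ} (hm : 1 ≤ m) {w : ℕ → ℝ}
    (hw : ∀ ℓ, 0 ≤ w ℓ) (hsum : ∑ ℓ ∈ Finset.Icc 1 m, w ℓ ^ p' ≤ 1) :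
    ∑ ℓ ∈ Finset.Icc 1 m, w ℓ ≤ (m : ℝ) ^ (1 - 1 / p') := by
  have hc : (0 : ℝ) < (m : ℝ) := by exact_mod_cast hm
  have hcard : (Finset.Icc 1 m).card = m := by simp
  have h := Real.arith_mean_le_rpow_mean (Finset.Icc 1 m) (fun _ => (m : ℝ)⁻¹) w
    (fun i _ => by positivity)
    (by simp [hcard, mul_comm, mul_inv_cancel₀ hc.ne']) (fun i _ => hw i) hp'
  rw [← Finset.mul_sum, ← Finset.mul_sum] at h
  have h2 : ((m : ℝ)⁻¹ * ∑ ℓ ∈ Finset.Icc 1 m, w ℓ ^ p') ^ (1 / p')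
      ≤ ((m : ℝ)⁻¹) ^ (1 / p') := by
    apply Real.rpow_le_rpow (mul_nonneg (by positivity)
      (Finset.sum_nonneg fun ℓ _ => Real.rpow_nonneg (hw ℓ) _)) _ (by positivity)
    calc (m : ℝ)⁻¹ * ∑ ℓ ∈ Finset.Icc 1 m, w ℓ ^ p' ≤ (m : ℝ)⁻¹ * 1 :=
          mul_le_mul_of_nonneg_left hsum (by positivity)
      _ = (m : ℝ)⁻¹ := mul_one _
  have h3 : (m : ℝ)⁻¹ * ∑ ℓ ∈ Finset.Icc 1 m, w ℓ ≤ ((m : ℝ)⁻¹) ^ (1 / p') := h.trans h2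
  have h4 : ∑ ℓ ∈ Finset.Icc 1 m, w ℓ ≤ (m : ℝ) * ((m : ℝ)⁻¹) ^ (1 / p') := by
    have := mul_le_mul_of_nonneg_left h3 hc.le
    rwa [← mul_assoc, mul_inv_cancel₀ hc.ne', one_mul] at this
  refine h4.trans_eq ?_
  rw [← Real.rpow_neg_one (m : ℝ), ← Real.rpow_mul hc.le]
  rw [show (m:ℝ) * (m:ℝ) ^ ((-1 : ℝ) * (1/p')) = (m:ℝ) ^ ((1:ℝ) + (-1)*(1/p')) by
    rw [Real.rpow_add hc, Real.rpow_one]]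
  congr 1; ring

theorem Dp_harmonic_bounds (p : ℝ) (hp : 2 < p) (T r : ℕ) (hr : 1 ≤ r) (hTr : r ≤ T) :
    ((T : ℝ) - r + 1) ^ ((2 : ℝ) / p) * (∑ k ∈ Finset.Icc (T - r + 1) T, (1 : ℝ) / k) ≤
      sInf {s : ℝ | ∃ w : ℕ → ℝ, (∀ ℓ, 0 ≤ w ℓ) ∧
        (∑ ℓ ∈ Finset.Icc 1 T, w ℓ ^ (p / 2)) ≤ 1 ∧
        (∀ i ∈ Finset.Icc 1 r, 0 < ∑ ℓ ∈ Finset.Icc 1 (T - r + i), w ℓ) ∧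
        s = ∑ i ∈ Finset.Icc 1 r, (∑ ℓ ∈ Finset.Icc 1 (T - r + i), w ℓ)⁻¹} ∧
    sInf {s : ℝ | ∃ w : ℕ → ℝ, (∀ ℓ, 0 ≤ w ℓ) ∧
        (∑ ℓ ∈ Finset.Icc 1 T, w ℓ ^ (p / 2)) ≤ 1 ∧
        (∀ i ∈ Finset.Icc 1 r, 0 < ∑ ℓ ∈ Finset.Icc 1 (T - r + i), w ℓ) ∧
        s = ∑ i ∈ Finset.Icc 1 r, (∑ ℓ ∈ Finset.Icc 1 (T - r + i), w ℓ)⁻¹} ≤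
      (T : ℝ) ^ ((2 : ℝ) / p) * (∑ k ∈ Finset.Icc (T - r + 1) T, (1 : ℝ) / k) := by
  have hp0 : (0:ℝ) < p := by linarith
  have hp2 : (1:ℝ) ≤ p / 2 := by linarith
  have hT1 : 1 ≤ T := hr.trans hTr
  have hT0 : (0:ℝ) < (T : ℝ) := by exact_mod_cast hT1
  have hq0 : (0:ℝ) < 2 / p := by positivity
  -- reindexing of the harmonic sum
  have hIcc : Finset.Icc (T - r + 1) T =
      Finset.map (addLeftEmbedding (T - r)) (Finset.Icc 1 r) := by
    rw [Finset.map_add_left_Icc]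
    congr 1
    omega
  have hre : ∀ f : ℕ → ℝ, (∑ k ∈ Finset.Icc (T - r + 1) T, f k)
      = ∑ i ∈ Finset.Icc 1 r, f (T - r + i) := by
    intro f
    rw [hIcc, Finset.sum_map]
    rfl
  have hcastb : ((T : ℝ) - r + 1) = ((T - r + 1 : ℕ) : ℝ) := by
    push_cast [Nat.cast_sub hTr]
    ring
  have hb0 : (0:ℝ) ≤ (T : ℝ) - r + 1 := by
    rw [hcastb]; positivity
  -- the key lower bound for every member of the set
  have key : ∀ s ∈ {s : ℝ | ∃ w : ℕ → ℝ, (∀ ℓ, 0 ≤ w ℓ) ∧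
        (∑ ℓ ∈ Finset.Icc 1 T, w ℓ ^ (p / 2)) ≤ 1 ∧
        (∀ i ∈ Finset.Icc 1 r, 0 < ∑ ℓ ∈ Finset.Icc 1 (T - r + i), w ℓ) ∧
        s = ∑ i ∈ Finset.Icc 1 r, (∑ ℓ ∈ Finset.Icc 1 (T - r + i), w ℓ)⁻¹},
      ((T : ℝ) - r + 1) ^ ((2 : ℝ) / p) * (∑ k ∈ Finset.Icc (T - r + 1) T, (1 : ℝ) / k) ≤ s := by
    rintro s ⟨w, hw, hnorm, hpos, rfl⟩
    rw [hre, Finset.mul_sum]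
    refine Finset.sum_le_sum fun i hi => ?_
    simp only [Finset.mem_Icc] at hi
    set m := T - r + i with hm
    have hm1 : 1 ≤ m := by omega
    have hmc : (0:ℝ) < (m : ℝ) := by exact_mod_cast hm1
    have hsub : ∑ ℓ ∈ Finset.Icc 1 m, w ℓ ^ (p / 2) ≤ 1 := by
      refine le_trans (Finset.sum_le_sum_of_subset_of_nonneg
        (Finset.Icc_subset_Icc_right (by omega)) fun ℓ _ _ => Real.rpow_nonneg (hw ℓ) _) hnorm
    have hS := sum_le_card_rpow hp2 hm1 hw hsub
    have hpos' := hpos i (Finset.mem_Icc.mpr hi)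
    have hinv : ((m : ℝ) ^ ((1:ℝ) - 1 / (p/2)))⁻¹ ≤ (∑ ℓ ∈ Finset.Icc 1 m, w ℓ)⁻¹ :=
      inv_anti₀ hpos' hS
    refine le_trans ?_ hinv
    have heq : ((m : ℝ) ^ ((1:ℝ) - 1 / (p/2)))⁻¹ = (m : ℝ) ^ ((2:ℝ)/p) * ((m:ℝ))⁻¹ := by
      rw [← Real.rpow_neg hmc.le, ← Real.rpow_neg_one (m : ℝ), ← Real.rpow_add hmc]
      congr 1
      field_simp
      ring
    rw [heq, one_div]
    refine mul_le_mul_of_nonneg_right ?_ (by positivity)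
    refine Real.rpow_le_rpow hb0 ?_ hq0.le
    rw [hcastb]
    exact_mod_cast Nat.add_le_add_left hi.1 (T - r)
  -- the explicit witness
  set c : ℝ := (T : ℝ) ^ (-((2:ℝ)/p)) with hc
  have hc0 : 0 < c := Real.rpow_pos_of_pos hT0 _
  have hcpow : c ^ (p / 2) = (T : ℝ)⁻¹ := by
    rw [hc, ← Real.rpow_mul hT0.le,
      show (-((2:ℝ)/p)) * (p/2) = (-1 : ℝ) by field_simp, Real.rpow_neg_one]
  have hcinv : c⁻¹ = (T : ℝ) ^ ((2:ℝ)/p) := by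
    rw [hc, ← Real.rpow_neg hT0.le, neg_neg]
  have hmem : (T : ℝ) ^ ((2 : ℝ) / p) * (∑ k ∈ Finset.Icc (T - r + 1) T, (1 : ℝ) / k) ∈
      {s : ℝ | ∃ w : ℕ → ℝ, (∀ ℓ, 0 ≤ w ℓ) ∧
        (∑ ℓ ∈ Finset.Icc 1 T, w ℓ ^ (p / 2)) ≤ 1 ∧
        (∀ i ∈ Finset.Icc 1 r, 0 < ∑ ℓ ∈ Finset.Icc 1 (T - r + i), w ℓ) ∧
        s = ∑ i ∈ Finset.Icc 1 r, (∑ ℓ ∈ Finset.Icc 1 (T - r + i), w ℓ)⁻¹} := by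
    refine ⟨fun _ => c, fun _ => hc0.le, ?_, ?_, ?_⟩
    · have hcd : (Finset.Icc 1 T).card = T := by simp
      rw [Finset.sum_const, hcd, nsmul_eq_mul, hcpow, mul_inv_cancel₀ hT0.ne']
    · intro i hi
      simp only [Finset.mem_Icc] at hi
      have hcd : (Finset.Icc 1 (T - r + i)).card = T - r + i := by simp
      rw [Finset.sum_const, hcd, nsmul_eq_mul]
      have hmc : (0:ℝ) < ((T - r + i : ℕ):ℝ) := by
        exact_mod_cast (by omega : 0 < T - r + i)
      positivity
    · rw [hre (fun k => (1:ℝ) / (k:ℝ)), Finset.mul_sum]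
      refine Finset.sum_congr rfl fun i hi => ?_
      simp only [Finset.mem_Icc] at hi
      have hcd : (Finset.Icc 1 (T - r + i)).card = T - r + i := by simp
      have hmc : (0:ℝ) < ((T - r + i : ℕ):ℝ) := by
        exact_mod_cast (by omega : 0 < T - r + i)
      rw [Finset.sum_const, hcd, nsmul_eq_mul, mul_inv, hcinv, one_div]
      ring
  exact ⟨le_csInf ⟨_, hmem⟩ key, csInf_le ⟨_, key⟩ hmem⟩
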